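/- Let (X_i,κ_i) be digital images with x_i ∈ X_i for 1≤i≤v, and let n ∈ ℕ. Then the radius-n neighborhood of (x_1,…,x_v) in (Π_{i=1}^v X_i, NP_v(κ_1,…,κ_v)) equals the Cartesian product of the radius-n neighborhoods: N*_{NP_v(κ_1,…,κ_v)}((x_1,…,x_v), n) = Π_{i=1}^v N*_{κ_i}(x_i, n). -/

import Mathlib

/-- The normal product adjacency `NP_v(κ_1,…,κ_v)` on a finite product of digital images. -/
def NP {v : ℕ} {X : Fin v → Type*} (κ : ∀ i, X i → X i → Prop)
    (p q : ∀ i, X i) : Prop :=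
  p ≠ q ∧ ∀ i, p i = q i ∨ κ i (p i) (q i)

/-- `N*_κ(x,n)`: the set of points reachable from `x` by a `κ`-path of length at most `n`
(consecutive points equal or `κ`-adjacent). -/
def NStar {X : Type*} (κ : X → X → Prop) (x : X) (n : ℕ) : Set X :=
  {y | ∃ m ≤ n, ∃ c : ℕ → X, c 0 = x ∧ c m = y ∧
      ∀ j < m, c j = c (j + 1) ∨ κ (c j) (c (j + 1))}

/-- the radius-`n` neighborhood of `(x_1,…,x_v)` in
`(Π X_i, NP_v(κ_1,…,κ_v))` is the product of the radius-`n` neighborhoods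
`N*_{κ_i}(x_i, n)`. -/
theorem stmt16 (v : ℕ) (X : Fin v → Type*)
    (κ : ∀ i, X i → X i → Prop)
    (hκi : ∀ i x, ¬ κ i x x) (hκs : ∀ i x y, κ i x y → κ i y x)
    (x : ∀ i, X i) (n : ℕ) :
    NStar (NP κ) x n = Set.univ.pi (fun i => NStar (κ i) (x i) n) := by
  ext y
  constructor
  · rintro ⟨m, hm, c, h0, hmy, hstep⟩ i _
    refine ⟨m, hm, fun j => c j i, by simp [h0], by simp [hmy], fun j hj => ?_⟩
    rcases hstep j hj with h | ⟨_, h2⟩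
    · exact Or.inl (congrFun h i)
    · exact h2 i
  · intro hy
    choose m hm c h0 hcy hstep using fun i => hy i (Set.mem_univ i)
    refine ⟨n, le_refl n, fun j i => c i (min j (m i)), ?_, ?_, ?_⟩
    · funext i; simp only []; simpa using h0 i
    · funext i; simp only [min_eq_right (hm i)]; exact hcy i
    · intro j _
      have key : ∀ i, c i (min j (m i)) = c i (min (j + 1) (m i)) ∨
          κ i (c i (min j (m i))) (c i (min (j + 1) (m i))) := by
        intro i
        rcases lt_or_ge j (m i) with h | h
        · simp only [min_eq_left h.le, min_eq_left (show j + 1 ≤ m i from h)]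
          exact hstep i j h
        · simp only [min_eq_right h, min_eq_right (le_trans h (Nat.le_succ j))]
          exact Or.inl trivial
      by_cases heq : (fun i => c i (min j (m i))) = (fun i => c i (min (j + 1) (m i)))
      · exact Or.inl heq
      · exact Or.inr ⟨heq, key⟩
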